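/- arXiv:math/0206125 — 3 statements merged into one kernel-verified Lean document; each statement's English description precedes it below -/
import Mathlib

section
/- Let x, a ∈ R^{d+1} with ||x|| = ε > 0, ||a|| = 1, and suppose v := -a^T (x/||x||) satisfies 0 ≤ v < 1. Let y be the point on the line segment from x to a closest to the origin. Then ||y|| ≤ sqrt((1 - v^2)/(1 + ε^2 + 2εv)) · ε. -/
open RealInnerProductSpace

/-- quantitative progress estimate (5).  With `‖x‖ = ε > 0`, `‖a‖ = 1`,
violation `v = -⟪a, x/‖x‖⟫ ∈ [0, 1)`, the point `y` of the segment `[x, a]` closest to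
the origin satisfies `‖y‖ ≤ √((1 - v²)/(1 + ε² + 2εv)) · ε`. -/
theorem stmt5 {d : ℕ} (x a : EuclideanSpace ℝ (Fin (d + 1))) (ε v : ℝ)
    (hε : 0 < ε) (hx : ‖x‖ = ε) (ha : ‖a‖ = 1)
    (hv : v = -⟪a, (‖x‖)⁻¹ • x⟫) (hv0 : 0 ≤ v) (hv1 : v < 1)
    (y : EuclideanSpace ℝ (Fin (d + 1)))
    (hyseg : y ∈ segment ℝ x a)
    (hymin : ∀ z ∈ segment ℝ x a, ‖y‖ ≤ ‖z‖) :
    ‖y‖ ≤ Real.sqrt ((1 - v ^ 2) / (1 + ε ^ 2 + 2 * ε * v)) * ε := by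
  set D : ℝ := 1 + ε ^ 2 + 2 * ε * v with hD
  have hDpos : 0 < D := by positivity
  set t : ℝ := (ε ^ 2 + v * ε) / D with ht
  have ht0 : 0 ≤ t := by positivity
  have ht1 : t ≤ 1 := by
    rw [ht, div_le_one hDpos]; nlinarith
  have hax : ⟪a, x⟫ = -(v * ε) := by
    rw [hx, real_inner_smul_right] at hv
    field_simp at hv
    simp only [PiLp.inner_apply, RCLike.inner_apply, conj_trivial]
    simp only [PiLp.inner_apply, RCLike.inner_apply, conj_trivial] at hv
    linarith
  set z : EuclideanSpace ℝ (Fin (d + 1)) := (1 - t) • x + t • a with hz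
  have hzseg : z ∈ segment ℝ x a := ⟨1 - t, t, by linarith, ht0, by ring, rfl⟩
  have hz2 : ‖z‖ ^ 2 = (1 - v ^ 2) / D * ε ^ 2 := by
    have h1 : ‖z‖ ^ 2 = ⟪z, z⟫ := (real_inner_self_eq_norm_sq z).symm
    have hxx : ⟪x, x⟫ = ε ^ 2 := by
      rw [real_inner_self_eq_norm_sq, hx]
    have haa : ⟪a, a⟫ = 1 := by
      rw [real_inner_self_eq_norm_sq, ha]; norm_num
    have hxa : ⟪x, a⟫ = -(v * ε) := by rw [real_inner_comm]; exact hax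
    rw [h1, hz]
    simp only [inner_add_left, inner_add_right, real_inner_smul_left,
      real_inner_smul_right, hxx, haa, hxa, hax]
    rw [ht]
    field_simp
    ring
  have hbound : Real.sqrt ((1 - v ^ 2) / D) * ε = ‖z‖ := by
    have h2 : ‖z‖ = Real.sqrt (‖z‖ ^ 2) := by
      rw [Real.sqrt_sq (norm_nonneg z)]
    rw [h2, hz2, Real.sqrt_mul (div_nonneg (by nlinarith) hDpos.le), Real.sqrt_sq hε.le]
  rw [hbound]
  exact hymin z hzseg
end

section
/- Let Q = co{a_1, ..., a_{d+1}} ⊂ S^d be a regular spherical simplex with circumradius R' and vertex diameter D_v. Then cos D_v = ((d+1) cos^2 R' - 1) / sqrt(1 + (d-1)(d+1) cos^2 R'). -/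
open RealInnerProductSpace
open scoped BigOperators

/-- Lemma 3.3, Santaló: for a regular spherical `d`-simplex
`Q = co{a 0, ..., a d} ⊂ S^d` with circumradius `R'` (circumcenter `C`, a unit vector in
the span of the vertices with `⟪a i, C⟫ = cos R' > 0`), the vertex diameter `D_v`
— the angle between a vertex and the normalized centroid of the opposite facet —
satisfies `cos D_v = ((d+1) cos² R' - 1)/√(1 + (d-1)(d+1) cos² R')`. -/
theorem stmt10 {d : ℕ} (hd : 1 ≤ d) (a : Fin (d + 1) → EuclideanSpace ℝ (Fin (d + 1)))
    (t : ℝ) (ha : ∀ i, ‖a i‖ = 1) (hreg : ∀ i j, i ≠ j → ⟪a i, a j⟫ = t)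
    (hind : LinearIndependent ℝ a)
    (C : EuclideanSpace ℝ (Fin (d + 1))) (R' : ℝ)
    (hC1 : ‖C‖ = 1) (hCspan : C ∈ Submodule.span ℝ (Set.range a))
    (hCR : ∀ i, ⟪a i, C⟫ = Real.cos R') (hcos : 0 < Real.cos R') :
    ⟪a 0, ‖∑ i ∈ Finset.univ.erase 0, a i‖⁻¹ • ∑ i ∈ Finset.univ.erase 0, a i⟫ =
      ((d + 1) * Real.cos R' ^ 2 - 1) /
        Real.sqrt (1 + ((d : ℝ) - 1) * ((d : ℝ) + 1) * Real.cos R' ^ 2) := by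
  set c := Real.cos R' with hc
  set s : EuclideanSpace ℝ (Fin (d+1)) := ∑ i, a i with hs
  have hself : ∀ i, ⟪a i, a i⟫ = 1 := fun i => by
    rw [real_inner_self_eq_norm_sq, ha]; norm_num
  have hcard : ∀ j : Fin (d+1), (Finset.univ.erase j).card = d := by
    intro j
    rw [Finset.card_erase_of_mem (Finset.mem_univ j), Finset.card_univ, Fintype.card_fin]; omega
  have hjs : ∀ j, ⟪a j, s⟫ = 1 + (d : ℝ) * t := by
    intro j
    rw [hs, inner_sum, ← Finset.add_sum_erase _ _ (Finset.mem_univ j), hself,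
      Finset.sum_congr rfl (fun i hi => hreg j i (Finset.ne_of_mem_erase hi).symm),
      Finset.sum_const, hcard, nsmul_eq_mul]
  have hCs : ⟪C, s⟫ = ((d : ℝ) + 1) * c := by
    rw [hs, inner_sum, Finset.sum_congr rfl (fun i _ => (real_inner_comm _ _).trans (hCR i)),
      Finset.sum_const, Finset.card_univ, Fintype.card_fin, nsmul_eq_mul]
    push_cast; ring
  have hsspan : s ∈ Submodule.span ℝ (Set.range a) :=
    Submodule.sum_mem _ fun i _ => Submodule.subset_span (Set.mem_range_self i)
  set v : EuclideanSpace ℝ (Fin (d+1)) := c • s - (1 + (d : ℝ) * t) • C with hv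
  have hvspan : v ∈ Submodule.span ℝ (Set.range a) :=
    Submodule.sub_mem _ (Submodule.smul_mem _ _ hsspan) (Submodule.smul_mem _ _ hCspan)
  have hvi : ∀ i, ⟪a i, v⟫ = 0 := by
    intro i
    rw [hv, inner_sub_right, real_inner_smul_right, real_inner_smul_right, hjs, hCR]
    ring
  have hv0 : v = 0 := by
    have horth : ∀ w ∈ Submodule.span ℝ (Set.range a), ⟪w, v⟫ = 0 := by
      intro w hw
      induction hw using Submodule.span_induction with
      | mem x hx => obtain ⟨i, rfl⟩ := hx; exact hvi i
      | zero => simp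
      | add x y _ _ hx hy => rw [inner_add_left, hx, hy]; ring
      | smul r x _ hx => rw [real_inner_smul_left, hx]; ring
    exact inner_self_eq_zero.mp (horth v hvspan)
  have h1 : 1 + (d : ℝ) * t = ((d : ℝ) + 1) * c ^ 2 := by
    have h0 : ⟪C, v⟫ = 0 := by rw [hv0, inner_zero_right]
    rw [hv, inner_sub_right, real_inner_smul_right, real_inner_smul_right, hCs,
      real_inner_self_eq_norm_sq, hC1] at h0
    nlinarith [h0]
  set b : EuclideanSpace ℝ (Fin (d+1)) := ∑ i ∈ Finset.univ.erase 0, a i with hb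
  have hab0 : a 0 + b = s := by
    rw [hb, hs]; exact Finset.add_sum_erase _ _ (Finset.mem_univ 0)
  have hbs : b = s - a 0 := by rw [← hab0]; abel
  have hss : ⟪s, s⟫ = ((d : ℝ) + 1) * (1 + (d : ℝ) * t) := by
    conv_lhs => rw [hs]
    rw [sum_inner, Finset.sum_congr rfl (fun j _ => hjs j), Finset.sum_const,
      Finset.card_univ, Fintype.card_fin, nsmul_eq_mul]
    push_cast; ring
  have hbb : ⟪b, b⟫ = 1 + ((d : ℝ) - 1) * ((d : ℝ) + 1) * c ^ 2 := by
    rw [hbs, real_inner_sub_sub_self, hss, real_inner_comm, hjs, hself]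
    linear_combination ((d : ℝ) - 1) * h1
  have hnb : ‖b‖ = Real.sqrt (1 + ((d : ℝ) - 1) * ((d : ℝ) + 1) * c ^ 2) := by
    rw [← hbb, real_inner_self_eq_norm_sq, Real.sqrt_sq (norm_nonneg _)]
  have hab : ⟪a 0, b⟫ = ((d : ℝ) + 1) * c ^ 2 - 1 := by
    rw [hbs, inner_sub_right, hjs, hself]; linarith [h1]
  rw [real_inner_smul_right, hab, ← hnb, inv_mul_eq_div]
end

section
/- Let Φ: B^d → R^{d+1}, Φ(x) = (x_1, ..., x_d, sqrt(1 - Σ x_i^2)), be the parametrization of the upper hemisphere, and for α > 0 let Ψ_α(x_1, ..., x_{d+1}) = (α x_1, x_2, ..., x_{d+1}) / sqrt(1 + (α^2 - 1) x_1^2) restricted to S^d. At the point x̄ = (β, 0, ..., 0, sqrt(1-β^2)) with 0 ≤ β < 1, the Jacobian volume elements satisfy det Φ(x̄) = 1/sqrt(1-β^2) and det(Ψ_α ∘ Φ)(x̄) = α / (sqrt(1-β^2) (1 + β^2(α^2-1))^{(d+1)/2}). Hence the local volume distortion of Ψ_α at any point of S^d with first coordinate β equals α / (1 + β^2(α^2-1))^{(d+1)/2}.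 -/
open RealInnerProductSpace
open scoped BigOperators

set_option maxHeartbeats 2000000

noncomputable section

/-- The Jacobian volume element `det Φ` of a parametrized `d`-surface
`Φ : ℝ^d → ℝ^{d+1}` at `x`: the square root of the Gram determinant of the partial
derivatives `∂Φ/∂x_i`. -/
def jacDet {d : ℕ} (f : EuclideanSpace ℝ (Fin d) → EuclideanSpace ℝ (Fin (d + 1)))
    (x : EuclideanSpace ℝ (Fin d)) : ℝ :=
  Real.sqrt
    (Matrix.det (Matrix.of fun i j : Fin d =>
      ⟪fderiv ℝ f x (EuclideanSpace.single i 1), fderiv ℝ f x (EuclideanSpace.single j 1)⟫))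

/-- Auxiliary: Gram determinant of a map whose partial derivatives have a
"diagonal + special first column" shape. -/
theorem gram_det_aux {d : ℕ} (hd : 0 < d)
    (f : EuclideanSpace ℝ (Fin d) → EuclideanSpace ℝ (Fin (d + 1)))
    (xbar : EuclideanSpace ℝ (Fin d)) (u v : ℝ) (w : ℝ)
    (hA : ∀ (j : Fin d) (k : Fin (d + 1)),
      fderiv ℝ f xbar (EuclideanSpace.single j 1) k =
        (Fin.snoc
          (fun m => if j = (⟨0, hd⟩ : Fin d) then (if m = (⟨0, hd⟩ : Fin d) then u else 0)
            else (if m = j then w else 0))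
          (if j = (⟨0, hd⟩ : Fin d) then v else 0) : Fin (d + 1) → ℝ) k) :
    jacDet f xbar = Real.sqrt ((u ^ 2 + v ^ 2) * (w ^ 2) ^ (d - 1)) := by
  set i0 : Fin d := ⟨0, hd⟩
  have hgram : (Matrix.of fun i j : Fin d =>
      (⟪fderiv ℝ f xbar (EuclideanSpace.single i 1),
        fderiv ℝ f xbar (EuclideanSpace.single j 1)⟫ : ℝ)) =
      Matrix.diagonal (fun j => if j = i0 then u ^ 2 + v ^ 2 else w ^ 2) := by
    ext j k
    rw [Matrix.of_apply, PiLp.inner_apply]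
    simp only [RCLike.inner_apply, starRingEnd_apply, star_trivial, hA]
    rw [Fin.sum_univ_castSucc]
    simp only [Fin.snoc_castSucc, Fin.snoc_last]
    by_cases hjk : j = k
    · subst hjk
      by_cases hj : j = i0
      · subst hj
        simp [Matrix.diagonal_apply_eq, Finset.sum_ite_eq', sq]
      · simp [Matrix.diagonal_apply_eq, hj, Finset.sum_ite_eq', sq]
    · rw [Matrix.diagonal_apply_ne _ hjk]
      have hzero : ∀ m ∈ Finset.univ,
          (if j = i0 then (if m = i0 then u else 0) else if m = j then w else 0) *
            (if k = i0 then (if m = i0 then u else 0) else if m = k then w else 0) = 0 := by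
        intro m _
        rcases eq_or_ne m j with hmj | hmj
        · have h2 : (if k = i0 then (if m = i0 then u else 0) else if m = k then w else 0)
              = 0 := by
            rcases eq_or_ne k i0 with hk | hk
            · rw [if_pos hk, if_neg (fun h : m = i0 => hjk ((hmj.symm.trans h).trans hk.symm))]
            · rw [if_neg hk, if_neg (fun h : m = k => hjk (hmj.symm.trans h))]
          rw [h2, mul_zero]
        · have h1 : (if j = i0 then (if m = i0 then u else 0) else if m = j then w else 0)
              = 0 := by
            rcases eq_or_ne j i0 with hj | hj
            · rw [if_pos hj, if_neg (fun h : m = i0 => hmj (h.trans hj.symm))]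
            · rw [if_neg hj, if_neg hmj]
          rw [h1, zero_mul]
      rw [Finset.sum_eq_zero (fun m hm => (mul_comm _ _).trans (hzero m hm)), zero_add, mul_comm]
      by_cases hj : j = i0
      · rw [if_pos hj, if_neg (fun hk : k = i0 => hjk (hj.trans hk.symm)), mul_zero]
      · rw [if_neg hj, zero_mul]
  rw [jacDet, hgram, Matrix.det_diagonal]
  congr 1
  rw [← Finset.mul_prod_erase Finset.univ _ (Finset.mem_univ i0), if_pos rfl]
  congr 1
  rw [Finset.prod_congr rfl (fun j hj => if_neg (Finset.ne_of_mem_erase hj)),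
    Finset.prod_const, Finset.card_erase_of_mem (Finset.mem_univ i0), Finset.card_univ,
    Fintype.card_fin]

/-- for the hemisphere parametrization
`Φ(x) = (x, √(1 - Σ xᵢ²))` and the rescaling
`Ψ_α(y) = (α y₁, y₂, ..., y_{d+1})/√(1 + (α² - 1) y₁²)`, at the point
`x̄ = (β, 0, ..., 0)` (so `Φ(x̄) = (β, 0, ..., 0, √(1-β²))`) one has
`det Φ(x̄) = 1/√(1-β²)` and
`det (Ψ_α ∘ Φ)(x̄) = α/(√(1-β²) (1 + β²(α² - 1))^{(d+1)/2})`; hence the local volume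
distortion of `Ψ_α` at a point of `S^d` with first coordinate `β` is
`α/(1 + β²(α²-1))^{(d+1)/2}`. -/
theorem stmt13 {d : ℕ} (hd : 0 < d) (α β : ℝ) (hα : 0 < α) (hβ0 : 0 ≤ β) (hβ1 : β < 1) :
    let Φ : EuclideanSpace ℝ (Fin d) → EuclideanSpace ℝ (Fin (d + 1)) :=
      fun x => WithLp.toLp 2 (Fin.snoc x (Real.sqrt (1 - ∑ i, x i ^ 2)) : Fin (d + 1) → ℝ)
    let Ψ : EuclideanSpace ℝ (Fin (d + 1)) → EuclideanSpace ℝ (Fin (d + 1)) :=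
      fun y => (Real.sqrt (1 + (α ^ 2 - 1) * (y 0) ^ 2))⁻¹ •
        (WithLp.toLp 2 (fun i => if i = 0 then α * y 0 else y i : Fin (d + 1) → ℝ) :
          EuclideanSpace ℝ (Fin (d + 1)))
    let xbar : EuclideanSpace ℝ (Fin d) := EuclideanSpace.single (⟨0, hd⟩ : Fin d) β
    jacDet Φ xbar = 1 / Real.sqrt (1 - β ^ 2) ∧
      jacDet (Ψ ∘ Φ) xbar =
        α / (Real.sqrt (1 - β ^ 2) * (1 + β ^ 2 * (α ^ 2 - 1)) ^ (((d : ℝ) + 1) / 2)) ∧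
      jacDet (Ψ ∘ Φ) xbar / jacDet Φ xbar =
        α / (1 + β ^ 2 * (α ^ 2 - 1)) ^ (((d : ℝ) + 1) / 2) := by
  intro Φ Ψ xbar
  set i0 : Fin d := ⟨0, hd⟩ with hi0
  have hs2 : (0 : ℝ) < 1 - β ^ 2 := by nlinarith
  set s := Real.sqrt (1 - β ^ 2) with hs
  have hspos : 0 < s := Real.sqrt_pos.2 hs2
  have hssq : s ^ 2 = 1 - β ^ 2 := Real.sq_sqrt hs2.le
  have hqpos : (0 : ℝ) < 1 + (α ^ 2 - 1) * β ^ 2 := by nlinarith [sq_nonneg (α * β)]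
  set q := 1 + (α ^ 2 - 1) * β ^ 2 with hqdef
  set r := Real.sqrt q with hr
  have hrpos : 0 < r := Real.sqrt_pos.2 hqpos
  have hrsq : r ^ 2 = 1 + (α ^ 2 - 1) * β ^ 2 := Real.sq_sqrt hqpos.le
  have hxbar : ∀ m : Fin d, xbar m = if m = i0 then β else 0 := by
    intro m; simp [xbar, EuclideanSpace.single_apply, hi0]
  have hsum : ∑ i, (xbar i) ^ 2 = β ^ 2 := by
    simp only [hxbar, ite_pow]
    simp [Finset.sum_ite_eq']
  have h0cast : (0 : Fin (d + 1)) = Fin.castSucc i0 := by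
    ext; simp [hi0]
  -- derivative of Φ
  set D : EuclideanSpace ℝ (Fin d) →L[ℝ] ℝ :=
    ∑ i, ((2 : ℝ) * xbar i) • (EuclideanSpace.proj i : EuclideanSpace ℝ (Fin d) →L[ℝ] ℝ) with hD
  have hsq : HasFDerivAt (fun x : EuclideanSpace ℝ (Fin d) => ∑ i, x i ^ 2) D xbar := by
    apply HasFDerivAt.fun_sum
    intro i _
    have hh := (hasDerivAt_pow 2 (xbar i)).comp_hasFDerivAt xbar
      (EuclideanSpace.proj i : EuclideanSpace ℝ (Fin d) →L[ℝ] ℝ).hasFDerivAt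
    simp at hh
    convert hh using 1 <;> rfl
  have hsqrt : HasFDerivAt (fun x : EuclideanSpace ℝ (Fin d) => Real.sqrt (1 - ∑ i, x i ^ 2))
      ((1 / (2 * s)) • (-D)) xbar := by
    have h1 : HasFDerivAt (fun x : EuclideanSpace ℝ (Fin d) => 1 - ∑ i, x i ^ 2) (-D) xbar :=
      hsq.const_sub 1
    have h2 := h1.sqrt (by rw [hsum]; positivity)
    simp only [hsum] at h2
    exact h2
  set Li : Fin (d + 1) → (EuclideanSpace ℝ (Fin d) →L[ℝ] ℝ) :=
    Fin.snoc (fun j => (EuclideanSpace.proj j : EuclideanSpace ℝ (Fin d) →L[ℝ] ℝ))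
      ((1 / (2 * s)) • (-D)) with hLi
  have hcomp : ∀ i : Fin (d + 1), HasFDerivAt (fun x => Φ x i) (Li i) xbar := by
    intro i
    induction i using Fin.lastCases with
    | last => simpa [Φ, hLi] using hsqrt
    | cast j =>
      simpa [Φ, hLi] using
        (EuclideanSpace.proj j : EuclideanSpace ℝ (Fin d) →L[ℝ] ℝ).hasFDerivAt
  set e := PiLp.continuousLinearEquiv 2 ℝ (fun _ : Fin (d + 1) => ℝ) with he
  set LΦ : EuclideanSpace ℝ (Fin d) →L[ℝ] EuclideanSpace ℝ (Fin (d + 1)) :=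
    (e.symm : (Fin (d + 1) → ℝ) →L[ℝ] EuclideanSpace ℝ (Fin (d + 1))).comp
      (ContinuousLinearMap.pi Li) with hLΦ
  have hΦ : HasFDerivAt Φ LΦ xbar := by
    have hG : HasFDerivAt (fun x i => Φ x i) (ContinuousLinearMap.pi Li) xbar :=
      hasFDerivAt_pi.2 hcomp
    exact e.symm.comp_hasFDerivAt_iff.2 hG
  have hLΦval : ∀ (v : EuclideanSpace ℝ (Fin d)) (k : Fin (d + 1)), LΦ v k = Li k v := by
    intro v k
    simp [hLΦ, he]
  have hDval : ∀ j : Fin d, D (EuclideanSpace.single j 1) = if j = i0 then 2 * β else 0 := by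
    intro j
    rw [hD]
    simp only [ContinuousLinearMap.sum_apply, ContinuousLinearMap.smul_apply,
      PiLp.proj_apply, EuclideanSpace.single_apply, hxbar, smul_eq_mul]
    rw [Finset.sum_eq_single j]
    · by_cases hj : j = i0 <;> simp [hj]
    · intro m _ hm; simp [hm]
    · simp
  have hA : ∀ (j : Fin d) (k : Fin (d + 1)),
      fderiv ℝ Φ xbar (EuclideanSpace.single j 1) k =
        (Fin.snoc (fun m => if m = j then (1 : ℝ) else 0)
          (if j = i0 then -(β / s) else 0) : Fin (d + 1) → ℝ) k := by
    intro j k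
    rw [hΦ.fderiv, hLΦval]
    induction k using Fin.lastCases with
    | last =>
      simp only [hLi, Fin.snoc_last, ContinuousLinearMap.smul_apply,
        ContinuousLinearMap.neg_apply, hDval, smul_eq_mul]
      by_cases hj : j = i0
      · rw [if_pos hj, if_pos hj]
        field_simp
      · rw [if_neg hj, if_neg hj]
        ring
    | cast m =>
      simp [hLi, EuclideanSpace.single_apply]
  -- first part
  have jac1 : jacDet Φ xbar = 1 / s := by
    have hjd := gram_det_aux hd Φ xbar 1 (-(β / s)) 1 (by
      intro j k
      rw [hA j k]
      congr 1
      funext m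
      by_cases hj : j = i0
      · subst hj; simp [← hi0]
      · simp [hj, ← hi0])
    rw [hjd]
    have h1 : (((1 : ℝ)) ^ 2 + (-(β / s)) ^ 2) * (((1 : ℝ)) ^ 2) ^ (d - 1) = 1 / s ^ 2 := by
      simp only [one_pow, mul_one]
      field_simp
      nlinarith [hssq]
    rw [h1, one_div, Real.sqrt_inv, Real.sqrt_sq hspos.le, one_div]
  refine ⟨jac1, ?_⟩
  -- derivative of Ψ at Φ xbar
  set y0 : EuclideanSpace ℝ (Fin (d + 1)) := Φ xbar with hy0
  have hy0cast : ∀ m : Fin d, y0 (Fin.castSucc m) = if m = i0 then β else 0 := by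
    intro m; rw [hy0]; simp only [Φ, Fin.snoc_castSucc]; exact hxbar m
  have hy00 : y0 0 = β := by rw [h0cast, hy0cast, if_pos rfl]
  have hy0last : y0 (Fin.last d) = s := by
    rw [hy0]; simp only [Φ, WithLp.ofLp_toLp, Fin.snoc_last, hsum]; exact hs.symm
  have hinner : HasDerivAt (fun t : ℝ => 1 + (α ^ 2 - 1) * t ^ 2) ((α ^ 2 - 1) * (2 * β)) β := by
    simpa using ((hasDerivAt_pow 2 β).const_mul (α ^ 2 - 1)).const_add 1
  have hgsqrt : HasDerivAt (fun t : ℝ => Real.sqrt (1 + (α ^ 2 - 1) * t ^ 2))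
      (((α ^ 2 - 1) * (2 * β)) / (2 * r)) β := by
    have h2 := hinner.sqrt (by rw [← hqdef]; exact hqpos.ne')
    rwa [← hqdef, ← hr] at h2
  set gd : ℝ := -(((α ^ 2 - 1) * (2 * β)) / (2 * r)) / r ^ 2 with hgd
  have hg : HasDerivAt (fun t : ℝ => (Real.sqrt (1 + (α ^ 2 - 1) * t ^ 2))⁻¹) gd β := by
    have h2 := hgsqrt.inv (by rw [← hqdef, ← hr]; exact hrpos.ne')
    rwa [← hqdef, ← hr] at h2
  have hcF : HasFDerivAt (fun y : EuclideanSpace ℝ (Fin (d + 1)) =>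
      (Real.sqrt (1 + (α ^ 2 - 1) * (y 0) ^ 2))⁻¹)
      (gd • (EuclideanSpace.proj (0 : Fin (d + 1)) :
        EuclideanSpace ℝ (Fin (d + 1)) →L[ℝ] ℝ)) y0 := by
    have hproj : HasFDerivAt (fun y : EuclideanSpace ℝ (Fin (d + 1)) => y 0)
        (EuclideanSpace.proj (0 : Fin (d + 1)) :
          EuclideanSpace ℝ (Fin (d + 1)) →L[ℝ] ℝ) y0 :=
      (EuclideanSpace.proj (0 : Fin (d + 1)) :
        EuclideanSpace ℝ (Fin (d + 1)) →L[ℝ] ℝ).hasFDerivAt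
    exact hg.comp_hasFDerivAt_of_eq y0 hproj hy00.symm
  set W : EuclideanSpace ℝ (Fin (d + 1)) →L[ℝ] EuclideanSpace ℝ (Fin (d + 1)) :=
    LinearMap.toContinuousLinearMap
      { toFun := fun y => (WithLp.toLp 2 (fun i => if i = 0 then α * y 0 else y i : Fin (d + 1) → ℝ) :
          EuclideanSpace ℝ (Fin (d + 1)))
        map_add' := by
          intro y z; ext i; by_cases h : i = 0 <;> simp [h, mul_add]
        map_smul' := by
          intro c y; ext i; by_cases h : i = 0 <;> simp [h] <;> ring } with hW
  have hWapply : ∀ (y : EuclideanSpace ℝ (Fin (d + 1))) (i : Fin (d + 1)),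
      W y i = if i = 0 then α * y 0 else y i := fun y i => rfl
  set MΨ : EuclideanSpace ℝ (Fin (d + 1)) →L[ℝ] EuclideanSpace ℝ (Fin (d + 1)) :=
    (Real.sqrt (1 + (α ^ 2 - 1) * (y0 0) ^ 2))⁻¹ • (W : EuclideanSpace ℝ (Fin (d + 1)) →L[ℝ]
      EuclideanSpace ℝ (Fin (d + 1))) +
      (gd • (EuclideanSpace.proj (0 : Fin (d + 1)) :
        EuclideanSpace ℝ (Fin (d + 1)) →L[ℝ] ℝ)).smulRight (W y0) with hMΨ
  have hΨd : HasFDerivAt Ψ MΨ y0 := hcF.smul W.hasFDerivAt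
  have hF : HasFDerivAt (Ψ ∘ Φ) (MΨ.comp LΦ) xbar := hΨd.comp xbar hΦ
  have hrinv : (Real.sqrt (1 + (α ^ 2 - 1) * (y0 0) ^ 2))⁻¹ = r⁻¹ := by
    rw [hy00, ← hqdef, ← hr]
  have hsne : s ≠ 0 := hspos.ne'
  have hrne : r ≠ 0 := hrpos.ne'
  -- values of the derivative of Ψ ∘ Φ
  have hB : ∀ (j : Fin d) (k : Fin (d + 1)),
      fderiv ℝ (Ψ ∘ Φ) xbar (EuclideanSpace.single j 1) k =
        (Fin.snoc
          (fun m => if j = i0 then (if m = i0 then α / r ^ 3 else 0)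
            else (if m = j then r⁻¹ else 0))
          (if j = i0 then -(α ^ 2 * β / (s * r ^ 3)) else 0) : Fin (d + 1) → ℝ) k := by
    intro j k
    rw [hF.fderiv, ContinuousLinearMap.comp_apply]
    set v : EuclideanSpace ℝ (Fin (d + 1)) := LΦ (EuclideanSpace.single j 1) with hv
    have hvval : ∀ k, v k = (Fin.snoc (fun m => if m = j then (1 : ℝ) else 0)
        (if j = i0 then -(β / s) else 0) : Fin (d + 1) → ℝ) k := by
      intro k; rw [hv, ← hΦ.fderiv]; exact hA j k
    have hv0 : v 0 = if j = i0 then 1 else 0 := by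
      rw [hvval, h0cast, Fin.snoc_castSucc]
      by_cases hj : j = i0 <;> simp [hj, eq_comm]
    have hMk : ∀ k, MΨ v k = r⁻¹ * W v k + (gd * v 0) * W y0 k := by
      intro k
      rw [hMΨ]
      simp only [ContinuousLinearMap.add_apply, ContinuousLinearMap.smul_apply,
        ContinuousLinearMap.smulRight_apply, PiLp.proj_apply, smul_eq_mul,
        PiLp.add_apply, PiLp.smul_apply, hrinv, smul_eq_mul]
    rw [hMk]
    induction k using Fin.lastCases with
    | last =>
      rw [Fin.snoc_last, hWapply, hWapply]
      have hlast0 : (Fin.last d : Fin (d + 1)) ≠ 0 := by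
        rw [h0cast]; exact (Fin.castSucc_lt_last i0).ne'
      rw [if_neg hlast0, if_neg hlast0, hvval (Fin.last d), Fin.snoc_last, hv0, hy0last]
      by_cases hj : j = i0
      · simp only [hj, if_pos rfl, hgd, ↓reduceIte]
        field_simp
        linear_combination (-β) * hrsq + (β - β*α^2) * hssq
      · simp only [hj, if_false, if_neg hj]
        ring
    | cast m =>
      rw [Fin.snoc_castSucc, hWapply, hWapply, hv0]
      by_cases hm : m = i0
      · subst hm
        rw [← h0cast, if_pos rfl, if_pos rfl, hy00]
        by_cases hj : j = i0
        · simp only [hj, if_pos rfl, hgd, ↓reduceIte]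
          field_simp
          linear_combination hrsq
        · simp only [if_neg hj, if_neg (fun h : i0 = j => hj h.symm)]
          ring
      · have hne : Fin.castSucc m ≠ 0 := by
          rw [h0cast]; exact fun h => hm (Fin.castSucc_injective _ h)
        rw [if_neg hne, if_neg hne, hvval (Fin.castSucc m), Fin.snoc_castSucc, hy0cast,
          if_neg hm]
        by_cases hj : j = i0
        · have hmj : m ≠ j := fun h => hm (h.trans hj)
          simp only [if_neg hmj, if_pos hj, if_neg hm]
          ring
        · simp only [if_neg hj]
          by_cases hmj : m = j
          · simp only [if_pos hmj]; ring
          · simp only [if_neg hmj]; ring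
  -- second part
  have hQpos : (0 : ℝ) < q ^ (((d : ℝ) + 1) / 2) := Real.rpow_pos_of_pos hqpos _
  have hQsqrt : Real.sqrt (q ^ (d + 1)) = q ^ (((d : ℝ) + 1) / 2) := by
    rw [Real.sqrt_eq_rpow, ← Real.rpow_natCast q (d + 1), ← Real.rpow_mul hqpos.le]
    congr 1
    push_cast
    ring
  have jac2 : jacDet (Ψ ∘ Φ) xbar = α / (s * q ^ (((d : ℝ) + 1) / 2)) := by
    have hjd := gram_det_aux hd (Ψ ∘ Φ) xbar (α / r ^ 3) (-(α ^ 2 * β / (s * r ^ 3))) r⁻¹ hB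
    rw [hjd]
    have key : ((α / r ^ 3) ^ 2 + (-(α ^ 2 * β / (s * r ^ 3))) ^ 2) * ((r⁻¹) ^ 2) ^ (d - 1)
        = α ^ 2 / (s ^ 2 * q ^ (d + 1)) := by
      have hq2 : (r ^ 3) ^ 2 = q ^ 3 := by
        have h3 : (r ^ 3) ^ 2 = (r ^ 2) ^ 3 := by ring
        rw [h3, hrsq, hqdef]
      have hsq2 : s ^ 2 + α ^ 2 * β ^ 2 = q := by rw [hssq, hqdef]; ring
      have e1 : (α / r ^ 3) ^ 2 + (-(α ^ 2 * β / (s * r ^ 3))) ^ 2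
          = α ^ 2 / (s ^ 2 * q ^ 2) := by
        field_simp
        linear_combination (-(r^4 + r^2*(1+(α^2-1)*β^2) + (1+(α^2-1)*β^2)^2)) * hrsq + (1+(α^2-1)*β^2)^2 * hssq
      have e2 : ((r⁻¹) ^ 2) ^ (d - 1) = (q ^ (d - 1))⁻¹ := by
        rw [inv_pow, hrsq, ← hqdef, inv_pow]
      rw [e1, e2]
      have hqe : q ^ 2 * q ^ (d - 1) = q ^ (d + 1) := by
        rw [← pow_add]; congr 1; omega
      rw [← hqe]
      have hq1 : (0:ℝ) < q ^ (d - 1) := by positivity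
      field_simp
    rw [key]
    have h2 : α ^ 2 / (s ^ 2 * q ^ (d + 1)) = (α / (s * Real.sqrt (q ^ (d + 1)))) ^ 2 := by
      rw [div_pow, mul_pow,
        Real.sq_sqrt (show (0:ℝ) ≤ q ^ (d + 1) by positivity)]
    rw [h2, Real.sqrt_sq (by positivity), hQsqrt]
  constructor
  · rw [jac2]
    congr 2
    rw [hqdef]; ring
  · rw [jac2, jac1]
    have hb : 1 + β ^ 2 * (α ^ 2 - 1) = q := by rw [hqdef]; ring
    rw [hb]
    have hQne : q ^ (((d : ℝ) + 1) / 2) ≠ 0 := hQpos.ne'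
    field_simp
end
end
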